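/- Let K be an algebraically closed field of characteristic p > 0 and f ∈ K[[x]] with f(0) = 0 and finite Milnor number μ. Then f is right (2μ − m(f) + 2)-determined: every g ∈ K[[x]] whose power series expansion agrees with f up to and including degree 2μ − m(f) + 2 is right equivalent to f. -/

import Mathlib

open PowerSeries

noncomputable def milnor (K : Type*) [Field K] (f : PowerSeries K) : ℕ :=
  Module.finrank K (PowerSeries K ⧸ Ideal.span {f.derivativeFun})

def MilnorFinite (K : Type*) [Field K] (f : PowerSeries K) : Prop :=
  Module.Finite K (PowerSeries K ⧸ Ideal.span {f.derivativeFun})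

def RightEquiv (K : Type*) [Field K] (f g : PowerSeries K) : Prop :=
  ∃ Φ : PowerSeries K ≃ₐ[K] PowerSeries K, Φ f = g

namespace Det
open Finset
variable {K : Type*} [Field K]


variable {K : Type*} [Field K]

/-- coefficient-level order lemma for products -/
theorem coeff_mul_eq_zero {a b : PowerSeries K} {r s : ℕ}
    (ha : ∀ i < r, coeff i a = 0) (hb : ∀ i < s, coeff i b = 0)
    {k : ℕ} (hk : k < r + s) : coeff k (a * b) = 0 := by
  rw [PowerSeries.coeff_mul]
  refine Finset.sum_eq_zero fun p hp => ?_
  rw [Finset.HasAntidiagonal.mem_antidiagonal] at hp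
  rcases lt_or_ge p.1 r with h | h
  · rw [ha _ h, zero_mul]
  · have : p.2 < s := by omega
    rw [hb _ this, mul_zero]

theorem coeff_pow_eq_zero {w : PowerSeries K} (hw : constantCoeff w = 0)
    {j k : ℕ} (hk : k < j) : coeff k (w ^ j) = 0 := by
  induction j generalizing k with
  | zero => omega
  | succ n ih =>
    rw [pow_succ]
    have hw' : ∀ i < 1, coeff i w = 0 := by
      intro i hi; interval_cases i; simpa using hw
    exact coeff_mul_eq_zero (fun i hi => ih hi) hw' (by omega)

theorem coeff_pow_self {w : PowerSeries K} (hw : constantCoeff w = 0) (j : ℕ) :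
    coeff j (w ^ j) = (coeff 1 w) ^ j := by
  induction j with
  | zero => simp
  | succ n ih =>
    rw [pow_succ, PowerSeries.coeff_mul]
    rw [Finset.sum_eq_single (n, 1)]
    · rw [ih, pow_succ]
    · rintro ⟨a, b⟩ hp hne
      rw [Finset.HasAntidiagonal.mem_antidiagonal] at hp
      simp only at hp
      rcases lt_or_ge a n with h | h
      · rw [coeff_pow_eq_zero hw h, zero_mul]
      · have : a = n ∨ (a = n + 1 ∧ b = 0) := by
          rcases Nat.eq_or_lt_of_le h with h2 | h2
          · exact Or.inl h2.symm
          · right; omega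
        rcases this with h2 | ⟨h2, h3⟩
        · have hb : b = 1 := by omega
          exact absurd (by rw [h2, hb]) hne
        · subst h3
          rw [← coeff_zero_eq_constantCoeff_apply] at hw
          rw [hw, mul_zero]
    · intro h
      exact absurd (by rw [Finset.HasAntidiagonal.mem_antidiagonal]) h



/-- substitution of `w` (with zero constant term) into `f` -/
noncomputable def subst (w f : PowerSeries K) : PowerSeries K :=
  PowerSeries.mk fun k => coeff k (Polynomial.aeval w (trunc (k+1) f))

theorem coeff_aeval {w : PowerSeries K} (hw : constantCoeff w = 0)
    (P : Polynomial K) (k : ℕ) :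
    coeff k (Polynomial.aeval w P) =
      ∑ j ∈ range (k+1), P.coeff j * coeff k (w ^ j) := by
  rw [Polynomial.aeval_eq_sum_range' (n := max (P.natDegree + 1) (k+1)) (by omega) w]
  rw [map_sum]
  rw [← Finset.sum_subset (Finset.range_subset_range.2 (le_max_right (P.natDegree+1) (k+1)))]
  · apply Finset.sum_congr rfl
    intro j hj
    rw [map_smul, smul_eq_mul]
  · intro j hj hjk
    rw [Finset.mem_range] at hj hjk
    have : k < j := by omega
    rw [map_smul, smul_eq_mul, coeff_pow_eq_zero hw this, mul_zero]

theorem coeff_subst {w : PowerSeries K} (hw : constantCoeff w = 0)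
    (f : PowerSeries K) (k : ℕ) :
    coeff k (subst w f) = ∑ j ∈ range (k+1), coeff j f * coeff k (w ^ j) := by
  rw [subst, coeff_mk, coeff_aeval hw]
  apply Finset.sum_congr rfl
  intro j hj
  rw [Finset.mem_range] at hj
  rw [coeff_trunc, if_pos (by omega)]



/-- congruence in the polynomial argument -/
theorem coeff_aeval_congr {w : PowerSeries K} (hw : constantCoeff w = 0)
    {P Q : Polynomial K} {k : ℕ} (h : ∀ i ≤ k, P.coeff i = Q.coeff i) :
    coeff k (Polynomial.aeval w P) = coeff k (Polynomial.aeval w Q) := by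
  rw [coeff_aeval hw, coeff_aeval hw]
  apply Finset.sum_congr rfl
  intro j hj
  rw [Finset.mem_range] at hj
  rw [h j (by omega)]

/-- coefficients of powers only depend on low coefficients -/
theorem coeff_pow_congr {w w' : PowerSeries K} {k : ℕ}
    (h : ∀ i ≤ k, coeff i w = coeff i w') (j : ℕ) :
    ∀ i ≤ k, coeff i (w ^ j) = coeff i (w' ^ j) := by
  induction j with
  | zero => intro i _; rfl
  | succ n ih =>
    intro i hi
    rw [pow_succ, pow_succ, PowerSeries.coeff_mul, PowerSeries.coeff_mul]
    apply Finset.sum_congr rfl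
    rintro ⟨a, b⟩ hp
    rw [Finset.HasAntidiagonal.mem_antidiagonal] at hp
    simp only at hp
    rw [ih a (by omega), h b (by omega)]

/-- congruence in the substituted series -/
theorem coeff_subst_congr {w w' f : PowerSeries K} {k : ℕ}
    (hw : constantCoeff w = 0)
    (h : ∀ i ≤ k, coeff i w = coeff i w') :
    coeff k (subst w f) = coeff k (subst w' f) := by
  have hw' : constantCoeff w' = 0 := by
    rw [← coeff_zero_eq_constantCoeff_apply] at hw ⊢
    rw [← h 0 (by omega)]; exact hw
  rw [coeff_subst hw, coeff_subst hw']
  apply Finset.sum_congr rfl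
  intro j hj
  rw [coeff_pow_congr h j k le_rfl]

/-- subst preserves (lower bounds on) order -/
theorem coeff_subst_eq_zero {w f : PowerSeries K} (hw : constantCoeff w = 0)
    {r : ℕ} (hf : ∀ i < r, coeff i f = 0) {k : ℕ} (hk : k < r) :
    coeff k (subst w f) = 0 := by
  rw [coeff_subst hw]
  apply Finset.sum_eq_zero
  intro j hj
  rw [Finset.mem_range] at hj
  rw [hf j (by omega), zero_mul]

theorem subst_X {w : PowerSeries K} (hw : constantCoeff w = 0) :
    subst w (X : PowerSeries K) = w := by
  ext k
  rw [coeff_subst hw]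
  rcases Nat.eq_zero_or_pos k with hk | hk
  · subst hk
    simpa using hw.symm
  · rw [Finset.sum_eq_single 1]
    · simp
    · intro j hj hne
      rw [coeff_X, if_neg hne, zero_mul]
    · intro h
      exact absurd (Finset.mem_range.2 (by omega)) h

theorem subst_id (f : PowerSeries K) : subst (X : PowerSeries K) f = f := by
  ext k
  rw [coeff_subst (by simp)]
  rw [Finset.sum_eq_single k]
  · rw [coeff_X_pow, if_pos rfl, mul_one]
  · intro j hj hne
    rw [coeff_X_pow, if_neg (fun h => hne h.symm), mul_zero]
  · intro h
    exact absurd (Finset.mem_range.2 (by omega)) h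



theorem coeff_subst_trunc {w : PowerSeries K} (hw : constantCoeff w = 0)
    (f : PowerSeries K) {k n : ℕ} (hk : k ≤ n) :
    coeff k (subst w f) = coeff k (Polynomial.aeval w (trunc (n+1) f)) := by
  rw [subst, coeff_mk]
  apply coeff_aeval_congr hw
  intro i hi
  rw [coeff_trunc, coeff_trunc, if_pos (by omega), if_pos (by omega)]

/-- substitution as an algebra endomorphism -/
noncomputable def substAlgHom {w : PowerSeries K} (hw : constantCoeff w = 0) :
    PowerSeries K →ₐ[K] PowerSeries K where
  toFun f := subst w f
  map_one' := by
    ext k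
    show coeff k (subst w (1 : PowerSeries K)) = coeff k (1 : PowerSeries K)
    rw [coeff_subst_trunc hw _ (le_refl k), trunc_one, map_one]
  map_mul' f g := by
    ext k
    show coeff k (subst w (f * g)) = coeff k (subst w f * subst w g)
    rw [coeff_subst_trunc hw _ (le_refl k)]
    have step1 : coeff k (Polynomial.aeval w (trunc (k+1) (f*g)))
        = coeff k (Polynomial.aeval w (trunc (k+1) f * trunc (k+1) g)) := by
      apply coeff_aeval_congr hw
      intro i hi
      rw [coeff_trunc, if_pos (by omega), PowerSeries.coeff_mul, Polynomial.coeff_mul]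
      apply Finset.sum_congr rfl
      rintro ⟨a, b⟩ hp
      rw [Finset.HasAntidiagonal.mem_antidiagonal] at hp
      simp only at hp
      rw [coeff_trunc, coeff_trunc, if_pos (by omega), if_pos (by omega)]
    rw [step1, map_mul, PowerSeries.coeff_mul, PowerSeries.coeff_mul]
    apply Finset.sum_congr rfl
    rintro ⟨a, b⟩ hp
    rw [Finset.HasAntidiagonal.mem_antidiagonal] at hp
    simp only at hp
    rw [coeff_subst_trunc hw f (show a ≤ k by omega),
        coeff_subst_trunc hw g (show b ≤ k by omega)]
  map_zero' := by
    ext k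
    show coeff k (subst w (0 : PowerSeries K)) = coeff k (0 : PowerSeries K)
    rw [coeff_subst_trunc hw _ (le_refl k), map_zero, map_zero]
  map_add' f g := by
    ext k
    show coeff k (subst w (f + g)) = coeff k (subst w f + subst w g)
    rw [(coeff k).map_add, coeff_subst_trunc hw f (le_refl k),
      coeff_subst_trunc hw g (le_refl k), coeff_subst_trunc hw _ (le_refl k), map_add,
      map_add, (coeff k).map_add]
  commutes' r := by
    ext k
    rw [coeff_subst_trunc hw _ (le_refl k)]
    show coeff k (Polynomial.aeval w (trunc (k+1) (C r))) = coeff k (C r)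
    rw [trunc_C, Polynomial.aeval_C]
    rfl

theorem substAlgHom_apply {w : PowerSeries K} (hw : constantCoeff w = 0)
    (f : PowerSeries K) : substAlgHom hw f = subst w f := rfl



section taylor
variable {v δ : PowerSeries K} {s : ℕ}

theorem coeff_D (hv : constantCoeff v = 0)
    (hδ : ∀ i < s, coeff i δ = 0) (hs : 1 ≤ s) :
    ∀ j k, k + 1 < j + s → coeff k ((v + δ) ^ j - v ^ j) = 0 := by
  have hvδ : constantCoeff (v + δ) = 0 := by
    rw [map_add, hv, ← coeff_zero_eq_constantCoeff_apply, hδ 0 (by omega), add_zero]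
  have hv' : ∀ i < 1, coeff i v = 0 := by
    intro i hi; interval_cases i; rw [coeff_zero_eq_constantCoeff]; exact hv
  have hvδ' : ∀ i < 1, coeff i (v + δ) = 0 := by
    intro i hi; interval_cases i; rw [coeff_zero_eq_constantCoeff]; exact hvδ
  intro j
  induction j with
  | zero => intro k hk; simp
  | succ n ih =>
    intro k hk
    have key : (v + δ) ^ (n+1) - v ^ (n+1)
        = (v + δ) * ((v + δ) ^ n - v ^ n) + δ * v ^ n := by ring
    rw [key, map_add]
    have t1 : coeff k ((v + δ) * ((v + δ) ^ n - v ^ n)) = 0 := by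
      apply coeff_mul_eq_zero hvδ' (r := 1) (s := n + s - 1)
      · intro i hi
        exact ih i (by omega)
      · omega
    have t2 : coeff k (δ * v ^ n) = 0 := by
      apply coeff_mul_eq_zero hδ (s := n)
      · intro i hi
        exact coeff_pow_eq_zero hv hi
      · omega
    rw [t1, t2, add_zero]

theorem coeff_E (hv : constantCoeff v = 0)
    (hδ : ∀ i < s, coeff i δ = 0) (hs : 1 ≤ s) :
    ∀ j k, k + 2 < j + 2 * s →
      coeff k ((v + δ) ^ j - v ^ j - j • (v ^ (j - 1) * δ)) = 0 := by
  have hvδ : constantCoeff (v + δ) = 0 := by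
    rw [map_add, hv, ← coeff_zero_eq_constantCoeff_apply, hδ 0 (by omega), add_zero]
  have hvδ' : ∀ i < 1, coeff i (v + δ) = 0 := by
    intro i hi; interval_cases i; rw [coeff_zero_eq_constantCoeff]; exact hvδ
  intro j
  induction j with
  | zero => intro k hk; simp
  | succ n ih =>
    match n, ih with
    | 0, _ =>
      intro k hk
      simp
    | n + 1, ih =>
      intro k hk
      have key : (v + δ) ^ (n+2) - v ^ (n+2) - (n+2) • (v ^ (n+2-1) * δ)
          = (v + δ) * ((v + δ) ^ (n+1) - v ^ (n+1) - (n+1) • (v ^ (n+1-1) * δ))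
            + (n+1) • (v ^ n * (δ * δ)) := by
        show (v + δ) ^ (n+2) - v ^ (n+2) - (n+2 : ℕ) • (v ^ (n+1) * δ)
          = (v + δ) * ((v + δ) ^ (n+1) - v ^ (n+1) - (n+1 : ℕ) • (v ^ n * δ))
            + (n+1 : ℕ) • (v ^ n * (δ * δ))
        simp only [nsmul_eq_mul, Nat.cast_add, Nat.cast_ofNat, Nat.cast_one]
        ring
      rw [key, map_add]
      have t1 : coeff k ((v + δ) * ((v + δ) ^ (n+1) - v ^ (n+1)
          - (n+1) • (v ^ (n+1-1) * δ))) = 0 := by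
        apply coeff_mul_eq_zero hvδ' (r := 1) (s := n + 2 * s - 1)
        · intro i hi
          exact ih i (by omega)
        · omega
      have t2 : coeff k ((n+1) • (v ^ n * (δ * δ))) = 0 := by
        rw [map_nsmul]
        have : coeff k (v ^ n * (δ * δ)) = 0 := by
          apply coeff_mul_eq_zero (r := n) (s := 2 * s)
          · intro i hi; exact coeff_pow_eq_zero hv hi
          · intro i hi
            exact coeff_mul_eq_zero hδ hδ (by omega)
          · omega
        rw [this, smul_zero]
      rw [t1, t2, add_zero]

end taylor


theorem constantCoeff_add_eq_zero {v δ : PowerSeries K} {s : ℕ}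
    (hv : constantCoeff v = 0) (hδ : ∀ i < s, coeff i δ = 0) (hs : 1 ≤ s) :
    constantCoeff (v + δ) = 0 := by
  rw [map_add, hv, ← coeff_zero_eq_constantCoeff_apply, hδ 0 (by omega), add_zero]

/-- T2 : first order variation bound -/
theorem coeff_subst_sub {v δ q : PowerSeries K} {s r : ℕ}
    (hv : constantCoeff v = 0) (hδ : ∀ i < s, coeff i δ = 0) (hs : 1 ≤ s)
    (hq : ∀ j < r, coeff j q = 0) {k : ℕ} (hk : k + 1 < r + s) :
    coeff k (subst (v + δ) q - subst v q) = 0 := by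
  have hvδ := constantCoeff_add_eq_zero hv hδ hs
  rw [map_sub, coeff_subst hvδ, coeff_subst hv, ← Finset.sum_sub_distrib]
  apply Finset.sum_eq_zero
  intro j hj
  rw [← mul_sub, ← map_sub]
  rcases lt_or_ge j r with h | h
  · rw [hq j h, zero_mul]
  · rw [coeff_D hv hδ hs j k (by omega), mul_zero]

/-- expansion of `(subst v q) * δ` -/
theorem coeff_subst_mul {v δ q : PowerSeries K}
    (hv : constantCoeff v = 0) (k : ℕ) :
    coeff k (subst v q * δ)
      = ∑ j ∈ range (k+1), coeff j q * coeff k (v ^ j * δ) := by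
  rw [PowerSeries.coeff_mul]
  have step : ∀ p ∈ antidiagonal k,
      coeff p.1 (subst v q) * coeff p.2 δ
        = ∑ j ∈ range (k+1), coeff j q * (coeff p.1 (v ^ j) * coeff p.2 δ) := by
    rintro ⟨a, b⟩ hp
    rw [Finset.HasAntidiagonal.mem_antidiagonal] at hp
    simp only at hp ⊢
    rw [coeff_subst hv, Finset.sum_mul]
    rw [← Finset.sum_subset (Finset.range_subset_range.2 (show a + 1 ≤ k + 1 by omega))]
    · apply Finset.sum_congr rfl
      intro j hj
      ring
    · intro j hj hja
      rw [Finset.mem_range] at hj hja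
      rw [coeff_pow_eq_zero hv (show a < j by omega), zero_mul, mul_zero]
  rw [Finset.sum_congr rfl step, Finset.sum_comm]
  apply Finset.sum_congr rfl
  intro j hj
  rw [← Finset.mul_sum, PowerSeries.coeff_mul]

/-- T1 : Newton step second-order bound -/
theorem coeff_newton {v δ f : PowerSeries K} {s m : ℕ}
    (hv : constantCoeff v = 0) (hδ : ∀ i < s, coeff i δ = 0) (hs : 1 ≤ s)
    (hf : ∀ j < m, coeff j f = 0) {k : ℕ} (hk : k + 2 < m + 2 * s) :
    coeff k (subst (v + δ) f - subst v f - subst v f.derivativeFun * δ) = 0 := by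
  have hvδ := constantCoeff_add_eq_zero hv hδ hs
  rw [map_sub, map_sub, coeff_subst hvδ, coeff_subst hv, coeff_subst_mul hv]
  have e3 : ∑ j ∈ range (k+1), coeff j f.derivativeFun * coeff k (v ^ j * δ)
      = ∑ j ∈ range (k+1), coeff j f * ((j : K) * coeff k (v ^ (j-1) * δ)) := by
    rw [Finset.sum_range_succ, Finset.sum_range_succ']
    have top1 : coeff k f.derivativeFun * coeff k (v ^ k * δ) = 0 := by
      rw [coeff_mul_eq_zero (r := k) (s := s)
        (fun i hi => coeff_pow_eq_zero hv hi) hδ (by omega), mul_zero]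
    have bot2 : coeff 0 f * (((0:ℕ) : K) * coeff k (v ^ (0-1) * δ)) = 0 := by
      push_cast
      rw [zero_mul, mul_zero]
    rw [top1, bot2, add_zero, add_zero]
    apply Finset.sum_congr rfl
    intro j hj
    rw [show f.derivativeFun = PowerSeries.derivative K f from rfl, PowerSeries.coeff_derivative, show j + 1 - 1 = j from rfl]
    push_cast
    ring
  rw [e3, ← Finset.sum_sub_distrib, ← Finset.sum_sub_distrib]
  apply Finset.sum_eq_zero
  intro j hj
  rcases lt_or_ge j m with h | h
  · rw [hf j h, zero_mul, zero_mul, zero_mul, sub_zero, sub_zero]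
  · have hE := coeff_E hv hδ hs j k (by omega)
    rw [map_sub, map_sub, map_nsmul, nsmul_eq_mul] at hE
    rw [← mul_sub, ← mul_sub]
    rw [show coeff k ((v+δ)^j) - coeff k (v^j) - (j:K) * coeff k (v^(j-1) * δ)
      = coeff k ((v+δ)^j) - (coeff k (v^j) + (j:K) * coeff k (v^(j-1) * δ)) by ring]
      at hE ⊢
    rw [hE, mul_zero]


/-- continuity of subst in the series being substituted into -/
theorem coeff_subst_congr_right {w a b : PowerSeries K} (hw : constantCoeff w = 0)
    {k : ℕ} (h : ∀ i ≤ k, coeff i a = coeff i b) :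
    coeff k (subst w a) = coeff k (subst w b) := by
  rw [subst, subst, coeff_mk, coeff_mk]
  apply coeff_aeval_congr hw
  intro i hi
  rw [coeff_trunc, coeff_trunc, if_pos (by omega), if_pos (by omega), h i hi]

theorem coeff_subst_leading {w s : PowerSeries K} (hw : constantCoeff w = 0)
    {r : ℕ} (hs : ∀ i < r, coeff i s = 0) :
    coeff r (subst w s) = coeff r s * (coeff 1 w) ^ r := by
  rw [coeff_subst hw]
  rw [Finset.sum_eq_single r]
  · rw [coeff_pow_self hw]
  · intro j hj hne
    rw [Finset.mem_range] at hj
    rw [hs j (by omega), zero_mul]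
  · intro h
    exact absurd (Finset.mem_range.2 (by omega)) h

theorem subst_injective {w : PowerSeries K} (hw : constantCoeff w = 0)
    (h1 : coeff 1 w = 1) : Function.Injective (substAlgHom (K := K) hw) := by
  have : ∀ s : PowerSeries K, substAlgHom hw s = 0 → s = 0 := by
    intro s hs
    classical
    by_contra hne
    have hex : ∃ n, coeff n s ≠ 0 := by
      by_contra hno
      push_neg at hno
      exact hne (PowerSeries.ext fun n => by rw [hno n, map_zero])
    set r := Nat.find hex with hr
    have h1' : coeff r s ≠ 0 := Nat.find_spec hex
    have h2 : ∀ i < r, coeff i s = 0 := fun i hi => by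
      by_contra hcon
      exact (Nat.find_min hex (by omega)) hcon
    have : coeff r (subst w s) = coeff r s * (coeff 1 w) ^ r :=
      coeff_subst_leading hw h2
    rw [← substAlgHom_apply hw, hs, map_zero, h1, one_pow, mul_one] at this
    exact h1' this.symm
  intro a b hab
  have h2 : substAlgHom hw (a - b) = 0 := by rw [map_sub, hab, sub_self]
  exact sub_eq_zero.mp (this _ h2)

/-- approximation sequence for surjectivity -/
noncomputable def liftSeq (w t : PowerSeries K) : ℕ → PowerSeries K
  | 0 => C (constantCoeff t)
  | n+1 => liftSeq w t n +
      PowerSeries.monomial (n+1)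
        (coeff (n+1) t - coeff (n+1) (subst w (liftSeq w t n)))

theorem subst_monomial {w : PowerSeries K} (hw : constantCoeff w = 0) (n : ℕ) (c : K) :
    subst w (PowerSeries.monomial n c) = C c * w ^ n := by
  have : (PowerSeries.monomial n c : PowerSeries K) = C c * X ^ n := by
    ext k
    simp [PowerSeries.coeff_monomial, coeff_C_mul, coeff_X_pow]
  rw [this, ← substAlgHom_apply hw, map_mul, map_pow]
  rw [show (C c : PowerSeries K) = algebraMap K (PowerSeries K) c from rfl]
  rw [AlgHom.commutes, substAlgHom_apply, subst_X hw]

theorem liftSeq_invariant {w t : PowerSeries K} (hw : constantCoeff w = 0)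
    (h1 : coeff 1 w = 1) :
    ∀ n, ∀ i ≤ n, coeff i (subst w (liftSeq w t n)) = coeff i t := by
  intro n
  induction n with
  | zero =>
    intro i hi
    interval_cases i
    have : subst w (liftSeq w t 0) = C (constantCoeff t) := by
      rw [liftSeq]
      rw [show (C (constantCoeff t) : PowerSeries K)
        = algebraMap K (PowerSeries K) (constantCoeff t) from rfl]
      rw [← substAlgHom_apply hw, AlgHom.commutes]
    rw [this]
    simp
  | succ n ih =>
    intro i hi
    rw [liftSeq, ← substAlgHom_apply hw, map_add, substAlgHom_apply, substAlgHom_apply,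
      map_add, subst_monomial hw]
    rcases Nat.lt_or_ge i (n+1) with h | h
    · rw [coeff_C_mul, coeff_pow_eq_zero hw h, mul_zero, add_zero]
      exact ih i (by omega)
    · have hieq : i = n + 1 := by omega
      subst hieq
      rw [coeff_C_mul, coeff_pow_self hw, h1, one_pow, mul_one]
      ring

theorem liftSeq_stable {w t : PowerSeries K} {i n : ℕ} (hi : i ≤ n) :
    coeff i (liftSeq w t n) = coeff i (liftSeq w t i) := by
  induction n with
  | zero =>
    have : i = 0 := by omega
    subst this; rfl
  | succ n ih =>
    rcases Nat.lt_or_ge i (n+1) with h | h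
    · rw [liftSeq, map_add, PowerSeries.coeff_monomial, if_neg (by omega), add_zero]
      exact ih (by omega)
    · have : i = n + 1 := by omega
      subst this
      rfl

theorem subst_surjective {w : PowerSeries K} (hw : constantCoeff w = 0)
    (h1 : coeff 1 w = 1) : Function.Surjective (substAlgHom (K := K) hw) := by
  intro t
  refine ⟨PowerSeries.mk fun k => coeff k (liftSeq w t k), ?_⟩
  ext k
  rw [substAlgHom_apply]
  have : coeff k (subst w (PowerSeries.mk fun k => coeff k (liftSeq w t k)))
      = coeff k (subst w (liftSeq w t k)) := by
    apply coeff_subst_congr_right hw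
    intro i hi
    rw [coeff_mk, liftSeq_stable hi]
  rw [this, liftSeq_invariant hw h1 k k le_rfl]



/-- exact division by X^d -/
noncomputable def shiftdiv (d : ℕ) (h : PowerSeries K) : PowerSeries K :=
  PowerSeries.mk fun i => coeff (d + i) h

theorem X_pow_mul_shiftdiv {d : ℕ} {h : PowerSeries K}
    (hh : ∀ i < d, coeff i h = 0) : (X : PowerSeries K) ^ d * shiftdiv d h = h := by
  ext n
  rw [coeff_X_pow_mul']
  split_ifs with hd
  · rw [shiftdiv, coeff_mk, Nat.add_sub_cancel' hd]
  · rw [hh n (by omega)]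

/-- the quotient by the derivative: explicit division -/
theorem div_spec {b : PowerSeries K} {d : ℕ}
    (hb : ∀ i < d, coeff i b = 0) (hbd : coeff d b ≠ 0)
    {a : PowerSeries K} {r : ℕ} (ha : ∀ i < r, coeff i a = 0) (hdr : d ≤ r) :
    b * ((shiftdiv d b)⁻¹ * shiftdiv d a) = a ∧
      ∀ i, i + d < r → coeff i ((shiftdiv d b)⁻¹ * shiftdiv d a) = 0 := by
  set B := shiftdiv d b with hB
  have hBconst : constantCoeff B ≠ 0 := by
    rw [hB, ← coeff_zero_eq_constantCoeff_apply, shiftdiv, coeff_mk]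
    simpa using hbd
  set A := shiftdiv d a with hA
  refine ⟨?_, ?_⟩
  · have hbB : (X : PowerSeries K) ^ d * B = b := X_pow_mul_shiftdiv hb
    have haA : (X : PowerSeries K) ^ d * A = a :=
      X_pow_mul_shiftdiv (fun i hi => ha i (by omega))
    calc b * (B⁻¹ * A) = (X ^ d * A) * (B * B⁻¹) := by rw [← hbB]; ring
    _ = a := by rw [PowerSeries.mul_inv_cancel _ hBconst, mul_one, haA]
  · intro i hi
    apply coeff_mul_eq_zero (r := 0) (s := i + 1)
    · omega
    · intro n hn
      rw [hA, shiftdiv, coeff_mk]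
      exact ha _ (by omega)
    · omega

variable {K : Type*} [Field K]

theorem milnor_lower {f : PowerSeries K} (hfin : MilnorFinite K f) {M : ℕ}
    (hM : ∀ q : PowerSeries K, ∀ i < M, coeff i (q * f.derivativeFun) = 0) :
    M ≤ milnor K f := by
  have : Module.Finite K (PowerSeries K ⧸ Ideal.span {f.derivativeFun}) := hfin
  set I := Ideal.span {f.derivativeFun} with hI
  have hli : LinearIndependent K
      (fun i : Fin M => (Ideal.Quotient.mkₐ K I ((X : PowerSeries K) ^ (i : ℕ)))) := by
    rw [Fintype.linearIndependent_iff]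
    intro g hg i
    have hsum : (Ideal.Quotient.mkₐ K I) (∑ j : Fin M, g j • (X : PowerSeries K) ^ (j : ℕ)) = 0 := by
      rw [map_sum]
      simpa only [map_smul] using hg
    rw [Ideal.Quotient.mkₐ_eq_mk] at hsum
    have hmem := (Ideal.Quotient.eq_zero_iff_mem).mp hsum
    rw [hI, Ideal.mem_span_singleton] at hmem
    obtain ⟨q, hq⟩ := hmem
    have hco : coeff (i : ℕ) (∑ j : Fin M, g j • (X : PowerSeries K) ^ (j : ℕ)) = g i := by
      rw [map_sum]
      rw [Finset.sum_eq_single i]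
      · rw [map_smul, coeff_X_pow, if_pos rfl, smul_eq_mul, mul_one]
      · intro j _ hne
        rw [map_smul, coeff_X_pow, if_neg (fun h => hne (Fin.ext (by omega))), smul_zero]
      · intro h
        exact absurd (Finset.mem_univ i) h
    rw [hq, mul_comm] at hco
    rw [← hco]
    exact hM q i i.isLt
  have := hli.fintype_card_le_finrank
  exact (by simpa using this : M ≤ Module.finrank K (PowerSeries K ⧸ I))

theorem derivativeFun_ne_zero {f : PowerSeries K} (hfin : MilnorFinite K f) :
    f.derivativeFun ≠ 0 := by
  intro h0
  have : milnor K f + 1 ≤ milnor K f := by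
    apply milnor_lower hfin
    intro q i _
    rw [h0, mul_zero, map_zero]
  omega


/-- the Newton iteration sequence -/
noncomputable def newtonSeq (f g : PowerSeries K) (d : ℕ) : ℕ → PowerSeries K
  | 0 => 0
  | n+1 => newtonSeq f g d n +
      (shiftdiv d f.derivativeFun)⁻¹ *
        shiftdiv d (g - subst (X + newtonSeq f g d n) f)

theorem newtonSeq_zero (f g : PowerSeries K) (d : ℕ) : newtonSeq f g d 0 = 0 := rfl

theorem newtonSeq_succ (f g : PowerSeries K) (d : ℕ) (n : ℕ) :
    newtonSeq f g d (n+1) = newtonSeq f g d n +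
      (shiftdiv d f.derivativeFun)⁻¹ *
        shiftdiv d (g - subst (X + newtonSeq f g d n) f) := rfl

end Det

theorem stmt_9 (K : Type*) [Field K] [IsAlgClosed K] (p : ℕ) (hp : p.Prime) [CharP K p]
    (f g : PowerSeries K) (hf0 : constantCoeff f = 0) (hfin : MilnorFinite K f)
    (m : ℕ) (hm : coeff m f ≠ 0) (hmin : ∀ i < m, coeff i f = 0)
    (hjet : ∀ i ≤ 2 * milnor K f - m + 2, coeff i g = coeff i f) :
    RightEquiv K f g := by
  classical
  have hfd : f.derivativeFun ≠ 0 := Det.derivativeFun_ne_zero hfin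
  have hex : ∃ n, coeff n f.derivativeFun ≠ 0 := by
    by_contra hno
    push_neg at hno
    exact hfd (PowerSeries.ext fun n => by rw [hno n, map_zero])
  set d := Nat.find hex with hd'
  have hd : coeff d f.derivativeFun ≠ 0 := Nat.find_spec hex
  have hdlow : ∀ i < d, coeff i f.derivativeFun = 0 := fun i hi => by
    by_contra hcon
    exact (Nat.find_min hex hi) hcon
  have hmd : m ≤ d + 1 := by
    by_contra hcon
    push_neg at hcon
    apply hd
    rw [show f.derivativeFun = PowerSeries.derivative K f from rfl, PowerSeries.coeff_derivative, hmin (d+1) (by omega), zero_mul]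
  have hdμ : d ≤ milnor K f := by
    apply Det.milnor_lower hfin
    intro q i hi
    exact Det.coeff_mul_eq_zero (r := 0) (s := d)
      (fun _ h => absurd h (Nat.not_lt_zero _)) hdlow (by omega)
  set N := 2*d + 2 - m with hN'
  have hNm : N + m = 2*d + 2 := by omega
  have hNd : d + 1 ≤ N := by omega
  have hjet' : ∀ i ≤ N, coeff i g = coeff i f := by
    intro i hi
    exact hjet i (by omega)
  set u := Det.newtonSeq f g d with hu'
  have hmain : ∀ n, (∀ i < N + 1 - d, coeff i (u n) = 0) ∧
      (∀ i < N + 1 + n, coeff i (g - Det.subst (X + u n) f) = 0) := by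
    intro n
    induction n with
    | zero =>
      constructor
      · intro i _
        rw [hu', Det.newtonSeq_zero, map_zero]
      · intro i hi
        rw [hu', Det.newtonSeq_zero, add_zero, Det.subst_id, map_sub,
          hjet' i (by omega), sub_self]
    | succ n ih =>
      obtain ⟨ih1, ih2⟩ := ih
      have hvc : constantCoeff (X + u n) = 0 := by
        rw [map_add, PowerSeries.constantCoeff_X, ← coeff_zero_eq_constantCoeff_apply,
          ih1 0 (by omega), add_zero]
      obtain ⟨hdiv, hord⟩ := Det.div_spec hdlow hd ih2 (show d ≤ N+1+n by omega)
      set δ := (Det.shiftdiv d f.derivativeFun)⁻¹ *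
        Det.shiftdiv d (g - Det.subst (X + u n) f) with hδ'
      have hδs : ∀ i < N + 1 + n - d, coeff i δ = 0 := fun i hi => hord i (by omega)
      have hs1 : 1 ≤ N + 1 + n - d := by omega
      have hunext : u (n+1) = u n + δ := Det.newtonSeq_succ f g d n
      constructor
      · intro i hi
        rw [hunext, map_add, ih1 i hi, hδs i (by omega), add_zero]
      · intro k hk
        have hXk : X + u (n+1) = (X + u n) + δ := by rw [hunext, add_assoc]
        have hdecomp : g - Det.subst ((X + u n) + δ) f
            = ((g - Det.subst (X + u n) f) - f.derivativeFun * δ)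
              - (Det.subst ((X + u n) + δ) f - Det.subst (X + u n) f
                  - Det.subst (X + u n) f.derivativeFun * δ)
              - (Det.subst (X + u n) f.derivativeFun - f.derivativeFun) * δ := by
          ring
        have c1 : coeff k ((g - Det.subst (X + u n) f) - f.derivativeFun * δ) = 0 := by
          rw [hdiv, sub_self, map_zero]
        have c2 : coeff k (Det.subst ((X + u n) + δ) f - Det.subst (X + u n) f
            - Det.subst (X + u n) f.derivativeFun * δ) = 0 :=
          Det.coeff_newton hvc hδs hs1 hmin (by omega)
        have c3 : coeff k ((Det.subst (X + u n) f.derivativeFun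
            - f.derivativeFun) * δ) = 0 := by
          apply Det.coeff_mul_eq_zero (r := N) (s := N + 1 + n - d) ?_ hδs (by omega)
          intro i hi
          have hstep := Det.coeff_subst_sub (v := X) (δ := u n) (s := N + 1 - d)
            (q := f.derivativeFun) (r := d)
            (by rw [PowerSeries.constantCoeff_X]) ih1 (by omega) hdlow
            (k := i) (by omega)
          rwa [Det.subst_id] at hstep
        rw [hXk, hdecomp, map_sub, map_sub, c1, c2, c3, sub_zero, sub_zero]
  set U := PowerSeries.mk (fun k => coeff k (u k)) with hU'
  have hstab : ∀ i n, i ≤ n → coeff i (u n) = coeff i (u i) := by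
    intro i n hin
    induction n with
    | zero =>
      have : i = 0 := by omega
      subst this; rfl
    | succ n ihn =>
      rcases Nat.lt_or_ge i (n+1) with h | h
      · rw [hu', Det.newtonSeq_succ f g d n, ← hu', map_add]
        obtain ⟨hdiv, hord⟩ := Det.div_spec hdlow hd (hmain n).2 (show d ≤ N+1+n by omega)
        rw [hord i (by omega), add_zero]
        exact ihn (by omega)
      · have : i = n+1 := by omega
        subst this; rfl
  have hU0 : coeff 0 U = 0 := by
    rw [hU', coeff_mk]
    exact (hmain 0).1 0 (by omega)
  have hU1' : coeff 1 U = 0 := by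
    rw [hU', coeff_mk]
    exact (hmain 1).1 1 (by omega)
  have hUc : constantCoeff (X + U) = 0 := by
    rw [map_add, PowerSeries.constantCoeff_X, ← coeff_zero_eq_constantCoeff_apply,
      hU0, add_zero]
  have hU1 : coeff 1 (X + U) = 1 := by
    rw [map_add, hU1', add_zero, PowerSeries.coeff_one_X]
  have hsub : Det.subst (X + U) f = g := by
    ext k
    have e1 : coeff k (Det.subst (X + U) f) = coeff k (Det.subst (X + u (k+1)) f) := by
      apply Det.coeff_subst_congr hUc
      intro i hi
      rw [map_add, map_add, hU', coeff_mk, hstab i (k+1) (by omega)]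
    rw [e1]
    have h2 := (hmain (k+1)).2 k (by omega)
    rw [map_sub, sub_eq_zero] at h2
    exact h2.symm
  refine ⟨AlgEquiv.ofBijective (Det.substAlgHom hUc)
    ⟨Det.subst_injective hUc hU1, Det.subst_surjective hUc hU1⟩, ?_⟩
  show Det.substAlgHom hUc f = g
  rw [Det.substAlgHom_apply]
  exact hsub
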